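/- Let μ be a partition with μ₁ ≤ n and let 1 ≤ k ≤ n. Then ∑_{1≤i₁<⋯<i_k≤n} (μ̃_{i₁}+k−1)(μ̃_{i₂}+k−2)⋯(μ̃_{i_k}) = ∑_{1≤i₁<⋯<i_k≤n} ∑_σ Γ_σ(μ; i₁,…,i_k), where the inner sum is over all permutations σ of the set {i₁,…,i_k} and Γ_σ(μ; i₁,…,i_k) = ∏_{j : j is a cycle-maximum of σ} μ̃_j. -/
import Mathlib


open scoped Classical

/-- The `k`-th elementary shifted symmetric polynomial. -/
noncomputable def estar (n k : ℕ) (x : Fin n → ℂ) : ℂ :=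
  ∑ i : Fin k → Fin n, if StrictMono i then
    ∏ t : Fin k, (x (i t) + ((k : ℂ) - 1 - ((t : ℕ) : ℂ))) else 0

/-- The conjugate (transpose) partition (0-indexed). -/
noncomputable def conjP (n : ℕ) (μ : ℕ → ℕ) (j : ℕ) : ℕ :=
  ((Finset.range n).filter (fun i => j + 1 ≤ μ i)).card

/-- `e*_k(μ̃)` equals the double sum over strictly increasing `k`-tuples `i₁<⋯<i_k` and
permutations `σ` of `{i₁,…,i_k}` of `Γ_σ(μ; i₁,…,i_k) = ∏_{cycle-maxima j of σ} μ̃_j`. -/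

-- orbit of i.succ under decomposeFin.symm (p,e) contains succ of e-orbit of i
lemma orbit_up {k : ℕ} (p : Fin (k+1)) (e : Equiv.Perm (Fin k)) (i : Fin k) (m : ℕ) :
    ∃ m' : ℕ, ((Equiv.Perm.decomposeFin.symm (p, e)) ^ m') i.succ = ((e ^ m) i).succ := by
  set σ := Equiv.Perm.decomposeFin.symm (p, e) with hσ
  induction m with
  | zero => exact ⟨0, by simp⟩
  | succ m ih =>
    obtain ⟨m', hm'⟩ := ih
    have hstep : σ ((e ^ m) i).succ = Equiv.swap 0 p ((e ^ (m+1)) i).succ := by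
      rw [pow_succ']
      simp [hσ, Equiv.Perm.decomposeFin_symm_apply_succ, Equiv.Perm.mul_apply]
    by_cases hp : ((e ^ (m+1)) i).succ = p
    · refine ⟨m' + 2, ?_⟩
      have h1 : (σ ^ (m'+1)) i.succ = 0 := by
        rw [pow_succ', Equiv.Perm.mul_apply, hm', hstep, hp, Equiv.swap_apply_right]
      rw [pow_succ', Equiv.Perm.mul_apply, h1, hσ,
        Equiv.Perm.decomposeFin_symm_apply_zero, ← hp]
    · refine ⟨m' + 1, ?_⟩
      rw [pow_succ', Equiv.Perm.mul_apply, hm', hstep,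
        Equiv.swap_apply_of_ne_of_ne (Fin.succ_ne_zero _) hp]

lemma orbit_down {k : ℕ} (p : Fin (k+1)) (e : Equiv.Perm (Fin k)) (i : Fin k) (m : ℕ) :
    (∃ m' : ℕ, ((Equiv.Perm.decomposeFin.symm (p, e)) ^ m) i.succ = ((e ^ m') i).succ) ∨
    (((Equiv.Perm.decomposeFin.symm (p, e)) ^ m) i.succ = 0 ∧
      ∃ m' : ℕ, p = ((e ^ m') i).succ) := by
  set σ := Equiv.Perm.decomposeFin.symm (p, e) with hσ
  induction m with
  | zero => exact Or.inl ⟨0, by simp⟩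
  | succ m ih =>
    rcases ih with ⟨m', hm'⟩ | ⟨h0, m', hm'⟩
    · have hstep : σ ((e ^ m') i).succ = Equiv.swap 0 p ((e ^ (m'+1)) i).succ := by
        rw [pow_succ']
        simp [hσ, Equiv.Perm.decomposeFin_symm_apply_succ, Equiv.Perm.mul_apply]
      by_cases hp : ((e ^ (m'+1)) i).succ = p
      · refine Or.inr ⟨?_, m'+1, hp.symm⟩
        rw [pow_succ', Equiv.Perm.mul_apply, hm', hstep, hp, Equiv.swap_apply_right]
      · refine Or.inl ⟨m'+1, ?_⟩
        rw [pow_succ', Equiv.Perm.mul_apply, hm', hstep,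
          Equiv.swap_apply_of_ne_of_ne (Fin.succ_ne_zero _) hp]
    · refine Or.inl ⟨m', ?_⟩
      rw [pow_succ', Equiv.Perm.mul_apply, h0, hσ,
        Equiv.Perm.decomposeFin_symm_apply_zero, hm']

lemma cyclemax_succ_iff {k : ℕ} (p : Fin (k+1)) (e : Equiv.Perm (Fin k)) (i : Fin k) :
    (∀ m : ℕ, ((Equiv.Perm.decomposeFin.symm (p, e)) ^ m) i.succ ≤ i.succ) ↔
    (∀ m : ℕ, (e ^ m) i ≤ i) := by
  constructor
  · intro h m
    obtain ⟨m', hm'⟩ := orbit_up p e i m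
    have := h m'
    rw [hm'] at this
    exact Fin.succ_le_succ_iff.mp this
  · intro h m
    rcases orbit_down p e i m with ⟨m', hm'⟩ | ⟨h0, _⟩
    · rw [hm']; exact Fin.succ_le_succ_iff.mpr (h m')
    · rw [h0]; exact Fin.zero_le _

lemma cyclemax_zero_iff {k : ℕ} (p : Fin (k+1)) (e : Equiv.Perm (Fin k)) :
    (∀ m : ℕ, ((Equiv.Perm.decomposeFin.symm (p, e)) ^ m) 0 ≤ 0) ↔ p = 0 := by
  constructor
  · intro h
    have := h 1
    rw [pow_one, Equiv.Perm.decomposeFin_symm_apply_zero, Fin.le_zero_iff] at this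
    exact this
  · intro hp m
    induction m with
    | zero => simp
    | succ m ih =>
      rw [pow_succ', Equiv.Perm.mul_apply, Fin.le_zero_iff.mp ih,
        Equiv.Perm.decomposeFin_symm_apply_zero, hp]

lemma cycle_sum (k : ℕ) (x : Fin k → ℂ) :
    (∑ σ : Equiv.Perm (Fin k), ∏ t : Fin k,
      (if ∀ m : ℕ, (σ ^ m) t ≤ t then x t else 1))
    = ∏ t : Fin k, (x t + ((k : ℂ) - 1 - ((t : ℕ) : ℂ))) := by
  induction k with
  | zero => simp
  | succ k ih =>
    have hre := Equiv.sum_comp (Equiv.Perm.decomposeFin (n := k)).symm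
      (fun σ : Equiv.Perm (Fin (k+1)) => ∏ t : Fin (k+1),
        (if ∀ m : ℕ, (σ ^ m) t ≤ t then x t else 1))
    rw [← hre, Fintype.sum_prod_type]
    have hterm : ∀ (p : Fin (k+1)) (e : Equiv.Perm (Fin k)),
        (∏ t : Fin (k+1),
          (if ∀ m : ℕ, ((Equiv.Perm.decomposeFin.symm (p, e)) ^ m) t ≤ t then x t else 1))
        = (if p = 0 then x 0 else 1) *
          ∏ i : Fin k, (if ∀ m : ℕ, (e ^ m) i ≤ i then x i.succ else 1) := by
      intro p e
      rw [Fin.prod_univ_succ]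
      congr 1
      · simp only [cyclemax_zero_iff]
      · exact Finset.prod_congr rfl fun i _ => by rw [cyclemax_succ_iff]
    calc ∑ p : Fin (k+1), ∑ e : Equiv.Perm (Fin k), ∏ t : Fin (k+1),
          (if ∀ m : ℕ, ((Equiv.Perm.decomposeFin.symm (p, e)) ^ m) t ≤ t then x t else 1)
        = ∑ p : Fin (k+1), (if p = 0 then x 0 else 1) *
            ∑ e : Equiv.Perm (Fin k), ∏ i : Fin k,
              (if ∀ m : ℕ, (e ^ m) i ≤ i then x i.succ else 1) := by
          refine Finset.sum_congr rfl fun p _ => ?_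
          rw [Finset.mul_sum]
          exact Finset.sum_congr rfl fun e _ => hterm p e
      _ = (x 0 + k) * ∏ i : Fin k, (x i.succ + ((k : ℂ) - 1 - ((i : ℕ) : ℂ))) := by
          rw [← Finset.sum_mul, ih (fun i => x i.succ)]
          congr 1
          have he : ∀ i : Fin (k+1),
              (if i = 0 then x 0 else 1) = (if i = 0 then x 0 - 1 else 0) + 1 := by
            intro i; split <;> ring
          rw [Finset.sum_congr rfl fun i _ => he i, Finset.sum_add_distrib,
            Finset.sum_ite_eq' Finset.univ (0 : Fin (k+1)) (fun _ => x 0 - 1)]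
          simp [Finset.card_univ]
      _ = ∏ t : Fin (k+1), (x t + (((k+1 : ℕ) : ℂ) - 1 - ((t : ℕ) : ℂ))) := by
          rw [Fin.prod_univ_succ]
          congr 1
          · push_cast [Fin.val_zero]; ring
          · refine Finset.prod_congr rfl fun i _ => ?_
            have : ((i.succ : ℕ) : ℂ) = (i : ℕ) + 1 := by
              rw [Fin.val_succ]; push_cast; ring
            rw [this]; push_cast; ring

theorem stmt7 (n k : ℕ) (μ : ℕ → ℕ) (hμ : Antitone μ)
    (h1 : μ 0 ≤ n) (hvan : ∀ i, n ≤ i → μ i = 0)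
    (hk1 : 1 ≤ k) (hkn : k ≤ n) :
    estar n k (fun i => (conjP n μ (i : ℕ) : ℂ))
      = ∑ i : Fin k → Fin n, if StrictMono i then
          ∑ σ : Equiv.Perm (Fin k),
            ∏ t : Fin k,
              (if ∀ m : ℕ, (σ ^ m) t ≤ t then (conjP n μ ((i t : ℕ)) : ℂ) else 1)
        else 0 := by
  unfold estar
  refine Finset.sum_congr rfl fun i _ => ?_
  split
  · exact (cycle_sum k (fun t => (conjP n μ ((i t : ℕ)) : ℂ))).symm
  · rfl
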